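/- For any two consecutive steps of the AAVF method one has the two-step recursion q_{n+1} − 2cos(hΩ) q_n + q_{n−1} = h² φ₂(h²Ω²) [∫₀¹ f((1−σ)q_n + σq_{n+1}) dσ + ∫₀¹ f((1−σ)q_{n−1} + σq_n) dσ]. -/

import Mathlib

noncomputable def phi2 (V : ℝ) : ℝ :=
  if V = 0 then 1/2 else (1 - Real.cos (Real.sqrt V)) / V

noncomputable def sinc (y : ℝ) : ℝ :=
  if y = 0 then 1 else Real.sin y / y

lemma aux14 (h W x c s q qm pm p0 q1 I Im : ℝ) (hx : x = h * W) (hxne : x ≠ 0)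
    (hcs : s ^ 2 + c ^ 2 = 1)
    (e1 : q = c * qm + h * (s / x) * pm + h ^ 2 * ((1 - c) / x ^ 2) * Im)
    (e2 : p0 = -W * s * qm + c * pm + h * (s / x) * Im)
    (e3 : q1 = c * q + h * (s / x) * p0 + h ^ 2 * ((1 - c) / x ^ 2) * I) :
    q1 - 2 * c * q + qm = h ^ 2 * ((1 - c) / x ^ 2) * (I + Im) := by
  subst hx
  have hh : h ≠ 0 := fun h0 => hxne (by simp [h0])
  have hW : W ≠ 0 := fun h0 => hxne (by simp [h0])
  rw [e3, e2, e1]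
  field_simp
  linear_combination (Im - W ^ 2 * qm) * hcs

/-- Two consecutive AAVF steps satisfy the two-step recursion
`q_{n+1} − 2cos(hΩ)q_n + q_{n−1} = h²φ₂(h²Ω²)[∫₀¹f((1−σ)q_n+σq_{n+1})dσ
 + ∫₀¹f((1−σ)q_{n−1}+σq_n)dσ]`. -/
theorem stmt14 (n : ℕ) (Ω : Fin n → ℝ) (hΩ : ∀ j, 0 < Ω j) (h : ℝ) (hh : 0 < h)
    (f : (Fin n → ℝ) → (Fin n → ℝ))
    (qm q p0 q1 p1 : Fin n → ℝ)
    -- step from (qm, p0') to (q, p0) with averaged integral Im, then (q,p0) to (q1,p1) with I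
    (pm : Fin n → ℝ)
    (hqa : ∀ j, q j = Real.cos (h * Ω j) * qm j + h * sinc (h * Ω j) * pm j
        + h^2 * phi2 ((h * Ω j)^2) * ∫ σ in (0:ℝ)..1, f ((1 - σ) • qm + σ • q) j)
    (hpa : ∀ j, p0 j = -(Ω j) * Real.sin (h * Ω j) * qm j + Real.cos (h * Ω j) * pm j
        + h * sinc (h * Ω j) * ∫ σ in (0:ℝ)..1, f ((1 - σ) • qm + σ • q) j)
    (hqb : ∀ j, q1 j = Real.cos (h * Ω j) * q j + h * sinc (h * Ω j) * p0 j
        + h^2 * phi2 ((h * Ω j)^2) * ∫ σ in (0:ℝ)..1, f ((1 - σ) • q + σ • q1) j)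
    (hpb : ∀ j, p1 j = -(Ω j) * Real.sin (h * Ω j) * q j + Real.cos (h * Ω j) * p0 j
        + h * sinc (h * Ω j) * ∫ σ in (0:ℝ)..1, f ((1 - σ) • q + σ • q1) j) :
    ∀ j, q1 j - 2 * Real.cos (h * Ω j) * q j + qm j
      = h^2 * phi2 ((h * Ω j)^2) *
          ((∫ σ in (0:ℝ)..1, f ((1 - σ) • q + σ • q1) j)
            + ∫ σ in (0:ℝ)..1, f ((1 - σ) • qm + σ • q) j) := by
  intro j
  have hx0 : 0 < h * Ω j := mul_pos hh (hΩ j)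
  have hx : h * Ω j ≠ 0 := ne_of_gt hx0
  have hx2 : (h * Ω j) ^ 2 ≠ 0 := pow_ne_zero _ hx
  have hs : Real.sqrt ((h * Ω j) ^ 2) = h * Ω j := Real.sqrt_sq hx0.le
  have hqa' := hqa j
  have hpa' := hpa j
  have hqb' := hqb j
  simp only [phi2, sinc, if_neg hx, if_neg hx2, hs] at hqa' hpa' hqb' ⊢
  exact aux14 h (Ω j) (h * Ω j) (Real.cos (h * Ω j)) (Real.sin (h * Ω j)) (q j) (qm j)
    (pm j) (p0 j) (q1 j) _ _ rfl hx (Real.sin_sq_add_cos_sq _) hqa' hpa' hqb'
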